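/- For the Mann iteration (xₙ) of a κ-strict pseudo-contraction T with λₙ ∈ (κ,1) ⊆ (0,1), the sequence (‖xₙ - Txₙ‖) is nonincreasing. -/

import Mathlib

theorem stmt_4 {H : Type*} [NormedAddCommGroup H] [InnerProductSpace ℝ H]
    (C : Set H) (hCne : C.Nonempty) (hCconv : Convex ℝ C)
    (κ : ℝ) (hκ0 : 0 ≤ κ) (hκ1 : κ < 1)
    (T : H → H) (hTmap : Set.MapsTo T C C)
    (hT : ∀ u ∈ C, ∀ v ∈ C,
      ‖T u - T v‖ ^ 2 ≤ ‖u - v‖ ^ 2 + κ * ‖(u - T u) - (v - T v)‖ ^ 2)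
    (lam : ℕ → ℝ) (hlam : ∀ n, lam n ∈ Set.Ioo κ 1)
    (x : ℕ → H) (hx0 : x 0 ∈ C)
    (hxrec : ∀ n, x (n + 1) = lam n • x n + (1 - lam n) • T (x n)) :
    Antitone (fun n : ℕ => ‖x n - T (x n)‖) := by
  have hmem : ∀ n, x n ∈ C := by
    intro n
    induction n with
    | zero => exact hx0
    | succ n ih =>
      rw [hxrec]
      obtain ⟨h1, h2⟩ := hlam n
      exact hCconv ih (hTmap ih) (by linarith) (by linarith) (by ring)
  apply antitone_nat_of_succ_le
  intro n
  show ‖x (n + 1) - T (x (n + 1))‖ ≤ ‖x n - T (x n)‖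
  obtain ⟨hkl, hl1⟩ := hlam n
  set a := x n - T (x n) with ha
  set b := x (n + 1) - T (x (n + 1)) with hb
  have key := hT (x (n + 1)) (hmem (n + 1)) (x n) (hmem n)
  have hdiff : x (n + 1) - x n = (lam n - 1) • a := by
    rw [hxrec, ha]; module
  have hT2 : T (x (n + 1)) - T (x n) = lam n • a - b := by
    have hTb : T (x (n + 1)) = x (n + 1) - b := by rw [hb]; abel
    rw [hTb, hxrec, ha]; module
  rw [hT2, ← hb, ← ha, hdiff] at key
  have hlpos : 0 < lam n := lt_of_le_of_lt hκ0 hkl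
  have e1 : ‖lam n • a - b‖ ^ 2
      = (lam n) ^ 2 * ‖a‖ ^ 2 - 2 * (lam n * inner ℝ a b) + ‖b‖ ^ 2 := by
    rw [norm_sub_sq_real, norm_smul, real_inner_smul_left, Real.norm_eq_abs,
      abs_of_pos hlpos]
    ring
  have e2 : ‖(lam n - 1) • a‖ ^ 2 = (1 - lam n) ^ 2 * ‖a‖ ^ 2 := by
    rw [norm_smul, Real.norm_eq_abs, abs_of_neg (by linarith : lam n - 1 < 0)]
    ring
  have e3 : ‖b - a‖ ^ 2 = ‖b‖ ^ 2 - 2 * inner ℝ a b + ‖a‖ ^ 2 := by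
    rw [norm_sub_sq_real, real_inner_comm]
  rw [e1, e2, e3] at key
  have hcs : (inner ℝ a b : ℝ) ≤ ‖a‖ * ‖b‖ := real_inner_le_norm a b
  have key2 : (1 - κ) * ‖b‖ ^ 2 ≤ (1 - 2 * lam n + κ) * ‖a‖ ^ 2
      + 2 * (lam n - κ) * (‖a‖ * ‖b‖) := by
    nlinarith [key, mul_nonneg (by linarith : (0:ℝ) ≤ lam n - κ)
      (by linarith : (0:ℝ) ≤ ‖a‖ * ‖b‖ - inner ℝ a b)]
  by_contra hcon
  push_neg at hcon
  have hB : 0 < (1 - κ) * (‖b‖ - ‖a‖) ^ 2 :=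
    mul_pos (by linarith) (pow_pos (by linarith) 2)
  have hC : 0 ≤ 2 * (1 - lam n) * (‖a‖ * (‖b‖ - ‖a‖)) := by
    have := norm_nonneg a
    apply mul_nonneg (by linarith) (mul_nonneg this (by linarith))
  nlinarith [key2, hB, hC]
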